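/- Let t ≥ 3 be an integer and let M_t = t·I_4 − A(C_4) be the 4×4 integer matrix with diagonal entries t and with (i,j)-entry −1 exactly when vertices i and j are adjacent in the 4-cycle C_4. Let g = gcd(2t, t²) (so g = t if t is odd and g = 2t if t is even). Then det M_t = t⁴ − 4t², the cokernel ℤ^4 / M_t ℤ^4 is isomorphic to ℤ/gℤ ⊕ ℤ/((t⁴−4t²)/g)ℤ, and this group is not cyclic. (This is the sandpile group of any plane graph whose weak dual is C_4 and whose four interior faces all have length t.) -/

import Mathlib

/-- `c4Matrix t = t·I₄ - A(C₄)`: the `4 × 4` integer matrix with diagonal entries `t`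
and `(i,j)`-entry `-1` exactly when vertices `i` and `j` are adjacent in the
4-cycle `C₄`. -/
def c4Matrix (t : ℤ) : Matrix (Fin 4) (Fin 4) ℤ :=
  !![t, -1, 0, -1; -1, t, -1, 0; 0, -1, t, -1; -1, 0, -1, t]

/-- Auxiliary linear map used to present the cokernel of `c4Matrix t`. -/
def psiAux (t u v k l : ℤ) (g nn : ℕ) : (Fin 4 → ℤ) →ₗ[ℤ] ZMod g × ZMod nn where
  toFun x := (((v * (x 0 - x 2 + t * x 3) - u * (x 1 + t * x 2 - x 3) : ℤ) : ZMod g),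
              ((k * (x 0 - x 2 + t * x 3) + l * (x 1 + t * x 2 - x 3) : ℤ) : ZMod nn))
  map_add' x y := by
    refine Prod.ext ?_ ?_ <;>
      simp only [Pi.add_apply, Prod.fst_add, Prod.snd_add] <;>
      push_cast <;> ring
  map_smul' m x := by
    refine Prod.ext ?_ ?_ <;>
      simp only [Pi.smul_apply, smul_eq_mul, RingHom.id_apply, Prod.smul_fst, Prod.smul_snd,
        Prod.fst_mul, Prod.snd_mul, Prod.fst_intCast, Prod.snd_intCast, zsmul_eq_mul] <;>
      push_cast <;> ring

theorem psiAux_apply (t u v k l : ℤ) (g nn : ℕ) (x : Fin 4 → ℤ) :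
    psiAux t u v k l g nn x =
      (((v * (x 0 - x 2 + t * x 3) - u * (x 1 + t * x 2 - x 3) : ℤ) : ZMod g),
       ((k * (x 0 - x 2 + t * x 3) + l * (x 1 + t * x 2 - x 3) : ℤ) : ZMod nn)) := rfl

/-- For an integer `t ≥ 3` and `g = gcd(2t, t²)`, the matrix `M_t = t·I₄ - A(C₄)`
satisfies `det M_t = t⁴ - 4t²`, its cokernel `ℤ⁴ / M_t ℤ⁴` is isomorphic to
`ℤ/gℤ ⊕ ℤ/((t⁴ - 4t²)/g)ℤ`, and this group is not cyclic. (It is the sandpile group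
of any plane graph whose weak dual is `C₄` and whose four interior faces all have
length `t`.) -/
theorem c4_sandpile_group (t : ℤ) (ht : 3 ≤ t) :
    (c4Matrix t).det = t ^ 4 - 4 * t ^ 2 ∧
    Nonempty (((Fin 4 → ℤ) ⧸ LinearMap.range (c4Matrix t).mulVecLin) ≃+
      (ZMod (Int.gcd (2 * t) (t ^ 2)) ×
        ZMod (((t ^ 4 - 4 * t ^ 2) / (Int.gcd (2 * t) (t ^ 2) : ℤ)).toNat))) ∧
    ¬ IsAddCyclic ((Fin 4 → ℤ) ⧸ LinearMap.range (c4Matrix t).mulVecLin) := by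
  have htpos : (0:ℤ) < t := by linarith
  set g : ℕ := Int.gcd (2 * t) (t ^ 2) with hgdef
  have hgd1 : (g:ℤ) ∣ 2 * t := Int.gcd_dvd_left _ _
  have hgd2 : (g:ℤ) ∣ t ^ 2 := Int.gcd_dvd_right _ _
  have htg : (t:ℤ) ∣ (g:ℤ) := Int.dvd_coe_gcd (a := 2 * t) (b := t ^ 2) ⟨2, by ring⟩ ⟨t, by ring⟩
  have hgpos : (0:ℤ) < (g:ℤ) := by
    have h : 0 < g := by
      rw [hgdef]
      exact Int.gcd_pos_iff.mpr (Or.inl (by positivity))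
    exact_mod_cast h
  have htleg : t ≤ (g:ℤ) := Int.le_of_dvd hgpos htg
  obtain ⟨k, hk⟩ := hgd1   -- 2*t = g*k
  obtain ⟨l, hl⟩ := hgd2   -- t^2 = g*l
  set u : ℤ := Int.gcdA (2*t) (t^2) with hudef
  set v : ℤ := Int.gcdB (2*t) (t^2) with hvdef
  have hbez : (g:ℤ) = 2*t*u + t^2*v := by
    rw [hgdef]; exact Int.gcd_eq_gcd_ab (2*t) (t^2)
  have huv : v * l + u * k = 1 := by
    have h : (g:ℤ) * (v*l + u*k) = (g:ℤ) * 1 := by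
      rw [mul_one]; nth_rewrite 2 [hbez]
      rw [hk, hl]; ring
    exact mul_left_cancel₀ (ne_of_gt hgpos) h
  set n : ℤ := (g:ℤ) * (l^2 - k^2) with hndef
  have hng : (g:ℤ) * n = t^4 - 4*t^2 := by
    have h : t^4 - 4*t^2 = (t^2)*(t^2) - (2*t)*(2*t) := by ring
    rw [h, hk, hl, hndef]; ring
  have hdetpos : (0:ℤ) < t^4 - 4*t^2 := by nlinarith [sq_nonneg t, sq_nonneg (t-3), sq_nonneg (t^2 - 6)]
  have hnpos : (0:ℤ) < n := by
    rcases mul_pos_iff.mp (hng ▸ hdetpos) with ⟨_, h1⟩ | ⟨h2, _⟩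
    · exact h1
    · linarith
  set nn : ℕ := ((t ^ 4 - 4 * t ^ 2) / ((g:ℕ) : ℤ)).toNat with hnndef
  have hq : (t ^ 4 - 4 * t ^ 2) / ((g:ℕ) : ℤ) = n :=
    Int.ediv_eq_of_eq_mul_left (ne_of_gt hgpos) (by linear_combination -hng)
  have hnnn : ((nn:ℕ) : ℤ) = n := by
    rw [hnndef, hq, Int.toNat_of_nonneg hnpos.le]
  set ψ : (Fin 4 → ℤ) →ₗ[ℤ] ZMod g × ZMod nn := psiAux t u v k l g nn with hψdef
  have hψ : ∀ x : Fin 4 → ℤ, ψ x =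
      (((v * (x 0 - x 2 + t * x 3) - u * (x 1 + t * x 2 - x 3) : ℤ) : ZMod g),
       ((k * (x 0 - x 2 + t * x 3) + l * (x 1 + t * x 2 - x 3) : ℤ) : ZMod nn)) :=
    fun x => psiAux_apply t u v k l g nn x
  -- kernel = range of the matrix
  have hker : LinearMap.range (c4Matrix t).mulVecLin = LinearMap.ker ψ := by
    apply le_antisymm
    · rintro x ⟨c, rfl⟩
      simp only [LinearMap.mem_ker, hψ]
      have h0 : (c4Matrix t).mulVecLin c 0 = t * c 0 - c 1 - c 3 := by
        simp [c4Matrix, Matrix.mulVecLin_apply, Matrix.mulVec, dotProduct,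
          Fin.sum_univ_four]; ring
      have h1 : (c4Matrix t).mulVecLin c 1 = -(c 0) + t * c 1 - c 2 := by
        simp [c4Matrix, Matrix.mulVecLin_apply, Matrix.mulVec, dotProduct,
          Fin.sum_univ_four]; ring
      have h2 : (c4Matrix t).mulVecLin c 2 = -(c 1) + t * c 2 - c 3 := by
        simp [c4Matrix, Matrix.mulVecLin_apply, Matrix.mulVec, dotProduct,
          Fin.sum_univ_four]; ring
      have h3 : (c4Matrix t).mulVecLin c 3 = -(c 0) - c 2 + t * c 3 := by
        simp [c4Matrix, Matrix.mulVecLin_apply, Matrix.mulVec, dotProduct,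
          Fin.sum_univ_four]; ring
      rw [h0, h1, h2, h3]
      have e1 : v * ((t * c 0 - c 1 - c 3) - (-(c 1) + t * c 2 - c 3) + t * (-(c 0) - c 2 + t * c 3))
          - u * ((-(c 0) + t * c 1 - c 2) + t * (-(c 1) + t * c 2 - c 3) - (-(c 0) - c 2 + t * c 3))
          = (g:ℤ) * ((-(k*v) - l*u) * c 2 + c 3) := by
        linear_combination (-(v * c 2)) * hk + (-(u * c 2)) * hl - (c 3) * hbez
      have e2 : k * ((t * c 0 - c 1 - c 3) - (-(c 1) + t * c 2 - c 3) + t * (-(c 0) - c 2 + t * c 3))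
          + l * ((-(c 0) + t * c 1 - c 2) + t * (-(c 1) + t * c 2 - c 3) - (-(c 0) - c 2 + t * c 3))
          = n * c 2 := by
        linear_combination (-(k * c 2)) * hk + (l * c 2) * hl - c 2 * hndef
          + (k * c 3) * hl + (-(l * c 3)) * hk
      rw [e1, e2]
      refine Prod.ext ?_ ?_
      · push_cast
        simp
      · rw [← hnnn]
        push_cast
        simp
    · intro x hx
      rw [LinearMap.mem_ker, hψ, Prod.ext_iff] at hx
      obtain ⟨hx1, hx2⟩ := hx
      rw [Prod.fst_zero, ZMod.intCast_zmod_eq_zero_iff_dvd] at hx1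
      rw [Prod.snd_zero, ZMod.intCast_zmod_eq_zero_iff_dvd, hnnn] at hx2
      obtain ⟨α, hα⟩ := hx1
      obtain ⟨β, hβ⟩ := hx2
      set γ1 : ℤ := α + (v*k + u*l)*β with hγ1
      set γ2 : ℤ := β with hγ2
      have hA0 : x 0 - x 2 + t * x 3 = l*((g:ℤ)*α) + u*(n*β) := by
        linear_combination l * hα + u * hβ - (x 0 - x 2 + t * x 3) * huv
      have hB0 : x 1 + t * x 2 - x 3 = v*(n*β) - k*((g:ℤ)*α) := by
        linear_combination v * hβ - k * hα - (x 1 + t * x 2 - x 3) * huv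
      have hA : x 0 - x 2 + t * x 3 = t^2*γ1 - 2*t*γ2 := by
        linear_combination hA0 + (-γ1)*hl + γ2*hk + (-(g:ℤ)*l)*hγ1 + ((g:ℤ)*k)*hγ2
          + u*β*hndef + (-(g:ℤ)*k*β)*huv
      have hB : x 1 + t * x 2 - x 3 = -(2*t)*γ1 + t^2*γ2 := by
        linear_combination hB0 + γ1*hk + (-γ2)*hl + ((g:ℤ)*k)*hγ1 + (-(g:ℤ)*l)*hγ2
          + v*β*hndef + ((g:ℤ)*l*β)*huv
      refine ⟨![t*γ1 - γ2 - x 3, t*γ2 - γ1 - x 2, γ2, γ1], ?_⟩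
      funext i
      fin_cases i
      · simp only [Matrix.mulVecLin_apply]
        show (c4Matrix t).mulVec _ 0 = x 0
        simp [c4Matrix, Matrix.mulVec, dotProduct, Fin.sum_univ_four]
        linear_combination -hA
      · simp only [Matrix.mulVecLin_apply]
        show (c4Matrix t).mulVec _ 1 = x 1
        simp [c4Matrix, Matrix.mulVec, dotProduct, Fin.sum_univ_four]
        linear_combination -hB
      · simp only [Matrix.mulVecLin_apply]
        show (c4Matrix t).mulVec _ 2 = x 2
        simp [c4Matrix, Matrix.mulVec, dotProduct, Fin.sum_univ_four]
        ring
      · simp only [Matrix.mulVecLin_apply]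
        show (c4Matrix t).mulVec _ 3 = x 3
        simp [c4Matrix, Matrix.mulVec, dotProduct, Fin.sum_univ_four]
        ring
  -- surjectivity
  have hsurj : Function.Surjective ψ := by
    rintro ⟨p1, p2⟩
    obtain ⟨a, ha⟩ := ZMod.intCast_surjective (n := g) p1
    obtain ⟨b, hb⟩ := ZMod.intCast_surjective (n := nn) p2
    refine ⟨![l*a + u*b, -(k*a) + v*b, 0, 0], ?_⟩
    rw [hψ]
    have h0 : (![l*a + u*b, -(k*a) + v*b, 0, 0] : Fin 4 → ℤ) 0 = l*a + u*b := rfl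
    have h1 : (![l*a + u*b, -(k*a) + v*b, 0, 0] : Fin 4 → ℤ) 1 = -(k*a) + v*b := rfl
    have h2 : (![l*a + u*b, -(k*a) + v*b, 0, 0] : Fin 4 → ℤ) 2 = 0 := rfl
    have h3 : (![l*a + u*b, -(k*a) + v*b, 0, 0] : Fin 4 → ℤ) 3 = 0 := rfl
    rw [h0, h1, h2, h3]
    have e1 : v * ((l*a + u*b) - 0 + t * 0) - u * ((-(k*a) + v*b) + t * 0 - 0) = a := by
      linear_combination a * huv
    have e2 : k * ((l*a + u*b) - 0 + t * 0) + l * ((-(k*a) + v*b) + t * 0 - 0) = b := by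
      linear_combination b * huv
    rw [e1, e2, ha, hb]
  -- the additive equivalence
  let e : ((Fin 4 → ℤ) ⧸ LinearMap.range (c4Matrix t).mulVecLin) ≃+ (ZMod g × ZMod nn) :=
    ((Submodule.quotEquivOfEq _ _ hker).trans
      (ψ.quotKerEquivOfSurjective hsurj)).toAddEquiv
  refine ⟨?_, ⟨e⟩, ?_⟩
  · rw [show c4Matrix t = !![t, -1, 0, -1; -1, t, -1, 0; 0, -1, t, -1; -1, 0, -1, t] from rfl,
      Matrix.det_succ_row_zero]
    simp [Fin.sum_univ_succ, Matrix.det_succ_row_zero, Fin.succAbove,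
      Fin.castSucc, Fin.castAdd, Fin.castLE]
    ring
  · intro hcyc
    have hcyc2 : IsAddCyclic (ZMod g × ZMod nn) := isAddCyclic_of_surjective e e.surjective
    obtain ⟨z, hz⟩ := hcyc2.exists_generator
    have hcard : addOrderOf z = Nat.card (ZMod g × ZMod nn) :=
      addOrderOf_eq_card_of_forall_mem_zmultiples hz
    have hcard2 : Nat.card (ZMod g × ZMod nn) = g * nn := by
      rw [Nat.card_prod, Nat.card_zmod, Nat.card_zmod]
    have hgnn : g ∣ nn := by
      have h : (g:ℤ) ∣ ((nn:ℕ):ℤ) := by rw [hnnn, hndef]; exact Dvd.intro _ rfl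
      exact_mod_cast h
    have hsm : nn • z = 0 := by
      refine Prod.ext ?_ ?_
      · show nn • z.1 = 0
        rw [nsmul_eq_mul, (ZMod.natCast_eq_zero_iff nn g).mpr hgnn, zero_mul]
      · show nn • z.2 = 0
        rw [nsmul_eq_mul, ZMod.natCast_self, zero_mul]
    have hdvd : addOrderOf z ∣ nn := addOrderOf_dvd_of_nsmul_eq_zero hsm
    rw [hcard, hcard2] at hdvd
    have hnnpos : 0 < nn := by
      have h : (0:ℤ) < ((nn:ℕ):ℤ) := by rw [hnnn]; exact hnpos
      exact_mod_cast h
    have hgge : (3:ℤ) ≤ ((g:ℕ):ℤ) := le_trans ht htleg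
    have hgge' : 3 ≤ g := by exact_mod_cast hgge
    have hle := Nat.le_of_dvd hnnpos hdvd
    nlinarith [hle, hgge', hnnpos]
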